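/- Let κ^s < η < 0 and s₁ ∈ ℝ. Suppose Φ: {(s,τ) : τ ≤ s ≤ s₁} → ℝ obeys |Φ(s,τ)| ≤ K e^{κ^s (s−τ)}, and δB: (−∞,s₁] → ℝ satisfies ∫_{−∞}^{s₁} δB(τ)² dτ ≤ R² and δB ≥ 0, and U: (−∞,s₁] → ℝ satisfies |U(τ)| ≤ M e^{−ητ}. Then for every s ≤ s₁, ∫_{−∞}^{s} |Φ(s,τ)| δB(τ) |U(τ)| dτ ≤ K M e^{−ηs} (1/(2(η − κ^s)) + R²). -/
import Mathlib


open MeasureTheory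

open Real Set Filter in
lemma aux_int_stmt12 (b s : ℝ) (hb : 0 < b) :
    IntegrableOn (fun τ => Real.exp (b * (τ - s))) (Set.Iic s) := by
  refine integrableOn_Iic_of_intervalIntegral_norm_bounded (1/b) s
    (fun y : ℝ => ((Real.continuous_exp.comp (by continuity)).integrableOn_Ioc)) tendsto_id
    (Filter.Eventually.of_forall fun y => ?_)
  have h1 : ∀ x : ℝ, ‖Real.exp (b * (x - s))‖ = Real.exp (b*x) * Real.exp (-(b*s)) := by
    intro x
    rw [Real.norm_eq_abs, abs_of_pos (Real.exp_pos _), ← Real.exp_add]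
    ring_nf
  simp_rw [h1, intervalIntegral.integral_mul_const]
  rw [intervalIntegral.integral_comp_mul_left (fun u => Real.exp u) hb.ne', integral_exp]
  rw [smul_eq_mul]
  rw [div_eq_mul_inv, mul_comm (1:ℝ)]
  have : Real.exp (b*s) * Real.exp (-(b*s)) = 1 := by rw [← Real.exp_add]; simp
  calc b⁻¹ * (Real.exp (b*s) - Real.exp (b*y)) * Real.exp (-(b*s))
      ≤ b⁻¹ * Real.exp (b*s) * Real.exp (-(b*s)) := by
        have h2 := (Real.exp_pos (b*y)).le
        have h3 := (Real.exp_pos (-(b*s))).le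
        have h4 := (inv_pos.mpr hb).le
        nlinarith [mul_nonneg (mul_nonneg h4 h2) h3]
    _ = b⁻¹ * 1 := by rw [mul_assoc, this]
    _ = b⁻¹ * 1 := rfl

open Real Set Filter in
lemma aux_val_stmt12 (b s : ℝ) (hb : 0 < b) :
    ∫ τ in Set.Iic s, Real.exp (b * (τ - s)) = 1 / b := by
  have h := integral_Iic_of_hasDerivAt_of_tendsto' (a := s)
    (f := fun τ => Real.exp (b * (τ - s)) / b) (f' := fun τ => Real.exp (b * (τ - s)))
    (m := 0) ?_ (aux_int_stmt12 b s hb) ?_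
  · rw [h]; simp
  · intro x _
    have : HasDerivAt (fun τ : ℝ => b * (τ - s)) b x := by
      simpa using ((hasDerivAt_id x).sub_const s).const_mul b
    simpa [mul_comm, mul_div_assoc, mul_div_cancel_left₀ _ hb.ne'] using ((this.exp).div_const b)
  · have h2 : Tendsto (fun τ : ℝ => b * (τ - s)) atBot atBot := by
      have := tendsto_atBot_add_const_right atBot (-s) (tendsto_id (α := ℝ))
      simpa [sub_eq_add_neg] using this.const_mul_atBot hb
    have h3 := (Real.tendsto_exp_atBot.comp h2).div_const b
    simpa using h3

/-- Scalar dichotomy convolution estimate: if `|Φ(s,τ)| ≤ K e^{κ(s-τ)}` with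
`κ < η < 0`, `δB ≥ 0` with `∫_{-∞}^{s₁} δB² ≤ R²`, and `|U(τ)| ≤ M e^{-ητ}`,
then for every `s ≤ s₁`,
`∫_{-∞}^{s} |Φ(s,τ)| δB(τ) |U(τ)| dτ ≤ K M e^{-ηs} (1/(2(η-κ)) + R²)`. -/
theorem stmt_12 (s₁ κ η K M R : ℝ) (hκη : κ < η) (hη : η < 0)
    (Φ : ℝ → ℝ → ℝ) (δB U : ℝ → ℝ)
    (hΦm : ∀ s, Measurable (Φ s)) (hδBm : Measurable δB) (hUm : Measurable U)
    (hΦ : ∀ s τ, τ ≤ s → s ≤ s₁ → |Φ s τ| ≤ K * Real.exp (κ * (s - τ)))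
    (hδB : ∀ τ, 0 ≤ δB τ)
    (hδBL2 : IntegrableOn (fun τ => (δB τ)^2) (Set.Iic s₁))
    (hδBbd : ∫ τ in Set.Iic s₁, (δB τ)^2 ≤ R^2)
    (hU : ∀ τ, τ ≤ s₁ → |U τ| ≤ M * Real.exp (-η * τ)) :
    ∀ s ≤ s₁,
      ∫ τ in Set.Iic s, |Φ s τ| * δB τ * |U τ|
        ≤ K * M * Real.exp (-η * s) * (1 / (2 * (η - κ)) + R^2) := by
  intro s hs
  have hK : 0 ≤ K := by
    have h1 := hΦ s₁ s₁ le_rfl le_rfl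
    have h2 := abs_nonneg (Φ s₁ s₁)
    simp only [sub_self, mul_zero, Real.exp_zero, mul_one] at h1
    linarith
  have hM : 0 ≤ M := by
    have h1 := hU s₁ le_rfl
    have h2 := abs_nonneg (U s₁)
    nlinarith [Real.exp_pos (-η * s₁)]
  have hb : 0 < 2 * (η - κ) := by linarith
  set g : ℝ → ℝ := fun τ =>
    K * M * Real.exp (-η * s) * (Real.exp (2 * (η - κ) * (τ - s)) + (δB τ)^2) with hg_def
  have hδBL2' : IntegrableOn (fun τ => (δB τ)^2) (Set.Iic s) :=
    hδBL2.mono_set (Set.Iic_subset_Iic.mpr hs)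
  have hg : IntegrableOn g (Set.Iic s) :=
    ((aux_int_stmt12 _ s hb).add hδBL2').const_mul _
  have key : ∫ τ in Set.Iic s, |Φ s τ| * δB τ * |U τ| ≤ ∫ τ in Set.Iic s, g τ := by
    refine integral_mono_of_nonneg (Filter.Eventually.of_forall fun τ => mul_nonneg (mul_nonneg (abs_nonneg _) (hδB τ)) (abs_nonneg _)) hg ?_
    filter_upwards [ae_restrict_mem measurableSet_Iic] with τ hτ
    have hτs : τ ≤ s := hτ
    have hKe : (0:ℝ) ≤ K * Real.exp (κ * (s - τ)) := by positivity
    have e1 : |Φ s τ| * δB τ * |U τ|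
        ≤ (K * Real.exp (κ * (s - τ))) * δB τ * (M * Real.exp (-η * τ)) := by
      exact mul_le_mul (mul_le_mul (hΦ s τ hτs hs) le_rfl (hδB τ) hKe)
        (hU τ (hτs.trans hs)) (abs_nonneg _) (mul_nonneg hKe (hδB τ))
    have e2 : (K * Real.exp (κ * (s - τ))) * δB τ * (M * Real.exp (-η * τ))
        = K * M * Real.exp (-η * s) * (Real.exp ((κ + η) * (s - τ)) * δB τ) := by
      have h : Real.exp (-η*s) * Real.exp ((κ+η)*(s-τ)) = Real.exp (κ*(s-τ)) * Real.exp (-η*τ) := by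
        rw [← Real.exp_add, ← Real.exp_add]; ring_nf
      linear_combination (-(K * M * δB τ)) * h
    have e3 : Real.exp ((κ + η) * (s - τ)) ≤ Real.exp ((η - κ) * (τ - s)) :=
      Real.exp_le_exp.mpr (by nlinarith [sub_nonneg.mpr hτs])
    have e4 : Real.exp ((η - κ) * (τ - s)) * δB τ
        ≤ Real.exp (2 * (η - κ) * (τ - s)) + (δB τ)^2 := by
      have hsq : Real.exp (2 * (η - κ) * (τ - s)) = Real.exp ((η - κ) * (τ - s)) ^ 2 := by
        rw [sq, ← Real.exp_add]; ring_nf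
      rw [hsq]
      nlinarith [sq_nonneg (Real.exp ((η - κ) * (τ - s)) - δB τ), sq_nonneg (δB τ)]
    have hKMe : (0:ℝ) ≤ K * M * Real.exp (-η * s) := by positivity
    calc |Φ s τ| * δB τ * |U τ|
        ≤ K * M * Real.exp (-η * s) * (Real.exp ((κ + η) * (s - τ)) * δB τ) := by
          rw [← e2]; exact e1
      _ ≤ K * M * Real.exp (-η * s) * (Real.exp ((η - κ) * (τ - s)) * δB τ) := by
          apply mul_le_mul_of_nonneg_left (mul_le_mul_of_nonneg_right e3 (hδB τ)) hKMe
      _ ≤ g τ := mul_le_mul_of_nonneg_left e4 hKMe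
  refine key.trans ?_
  have hval : ∫ τ in Set.Iic s, g τ
      = K * M * Real.exp (-η * s) *
        (1 / (2 * (η - κ)) + ∫ τ in Set.Iic s, (δB τ)^2) := by
    rw [hg_def]
    rw [integral_const_mul, integral_add (aux_int_stmt12 _ s hb) hδBL2',
      aux_val_stmt12 _ s hb]
  rw [hval]
  have hmono : ∫ τ in Set.Iic s, (δB τ)^2 ≤ R^2 := by
    refine le_trans ?_ hδBbd
    apply setIntegral_mono_set hδBL2
    · exact Filter.Eventually.of_forall fun τ => by positivity
    · exact HasSubset.Subset.eventuallyLE (Set.Iic_subset_Iic.mpr hs)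
  have : (0:ℝ) ≤ K * M * Real.exp (-η * s) := by positivity
  exact mul_le_mul_of_nonneg_left (by linarith) this
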